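/- arXiv:2003.06242 — 2 statements merged into one kernel-verified Lean document; each statement's English description precedes it below -/
import Mathlib

section
/- Let κ ∈ ℝ and a < c < b be reals with (b−a)·√(max(κ,0)) < π. Let u : (a,b) → ℝ be continuous and suppose u satisfies the κ-concavity inequality on the subinterval (a,c] and also on the subinterval [c,b). Suppose further that u has a left derivative m⁻ at c (i.e. (u(c) − u(c−h))/h → m⁻ as h ↓ 0) and a right derivative m⁺ at c (i.e. (u(c+h) − u(c))/h → m⁺ as h ↓ 0). Then u satisfies the κ-concavity inequality on all of (a,b) if and only if m⁻ ≥ m⁺. -/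
open Real Set Filter

/-- The generalized sine function `sin_κ`. -/
noncomputable def sinK (κ x : ℝ) : ℝ :=
  if κ < 0 then Real.sinh (Real.sqrt (-κ) * x) / Real.sqrt (-κ)
  else if κ = 0 then x
  else Real.sin (Real.sqrt κ * x) / Real.sqrt κ

/-- `u` satisfies the κ-concavity inequality (`u'' + κ u ≤ 0`) on the set `s`. -/
def KConcIneqOn (κ : ℝ) (u : ℝ → ℝ) (s : Set ℝ) : Prop :=
  ∀ x ∈ s, ∀ y ∈ s, 0 < y - x → (0 < κ → (y - x) * Real.sqrt κ < Real.pi) →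
    ∀ t ∈ Set.Icc (0:ℝ) 1,
      u ((1 - t) * x + t * y) ≥
        (sinK κ ((1 - t) * (y - x)) / sinK κ (y - x)) * u x +
        (sinK κ (t * (y - x)) / sinK κ (y - x)) * u y

noncomputable def cosK (κ x : ℝ) : ℝ :=
  if κ < 0 then Real.cosh (Real.sqrt (-κ) * x)
  else if κ = 0 then 1
  else Real.cos (Real.sqrt κ * x)

lemma sinK_zero (κ : ℝ) : sinK κ 0 = 0 := by
  unfold sinK; split_ifs <;> simp

lemma cosK_zero (κ : ℝ) : cosK κ 0 = 1 := by
  unfold cosK; split_ifs <;> simp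

lemma sqrt_neg_pos' {κ : ℝ} (h : κ < 0) : 0 < Real.sqrt (-κ) := Real.sqrt_pos.2 (by linarith)

lemma sinK_pos {κ x : ℝ} (hx : 0 < x) (hπ : 0 < κ → x * Real.sqrt κ < Real.pi) :
    0 < sinK κ x := by
  unfold sinK
  split_ifs with h h0
  · exact div_pos (Real.sinh_pos_iff.2 (mul_pos (sqrt_neg_pos' h) hx)) (sqrt_neg_pos' h)
  · exact hx
  · have hκ : 0 < κ := lt_of_le_of_ne (not_lt.1 h) (Ne.symm h0)
    have hs : 0 < Real.sqrt κ := Real.sqrt_pos.2 hκ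
    refine div_pos (Real.sin_pos_of_pos_of_lt_pi (by positivity) ?_) hs
    rw [mul_comm]; exact hπ hκ

lemma sinK_nonneg {κ x : ℝ} (hx : 0 ≤ x) (hπ : 0 < κ → x * Real.sqrt κ < Real.pi) :
    0 ≤ sinK κ x := by
  rcases eq_or_lt_of_le hx with h | h
  · rw [← h, sinK_zero]
  · exact (sinK_pos h hπ).le

lemma sinK_add (κ p q : ℝ) :
    sinK κ (p + q) = sinK κ p * cosK κ q + cosK κ p * sinK κ q := by
  unfold sinK cosK
  split_ifs with h h0
  · simp only [mul_add, Real.sinh_add]; ring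
  · ring
  · simp only [mul_add, Real.sin_add]; ring

lemma sinK_quad (κ α β γ δ : ℝ) :
    sinK κ (γ - α) * sinK κ (δ - β) =
      sinK κ (γ - β) * sinK κ (δ - α) + sinK κ (β - α) * sinK κ (δ - γ) := by
  unfold sinK
  split_ifs with h h0
  · simp only [mul_sub, Real.sinh_sub]; ring
  · ring
  · simp only [mul_sub, Real.sin_sub]; ring

lemma hasDerivAt_sinK (κ x : ℝ) : HasDerivAt (sinK κ) (cosK κ x) x := by
  unfold sinK cosK
  split_ifs with h h0
  · have hs : Real.sqrt (-κ) ≠ 0 := (sqrt_neg_pos' h).ne'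
    have h1 : HasDerivAt (fun y : ℝ => Real.sinh (Real.sqrt (-κ) * y))
        (Real.cosh (Real.sqrt (-κ) * x) * (Real.sqrt (-κ) * 1)) x :=
      (Real.hasDerivAt_sinh _).comp x ((hasDerivAt_id x).const_mul _)
    have h2 := h1.div_const (Real.sqrt (-κ))
    have : Real.cosh (Real.sqrt (-κ) * x) * (Real.sqrt (-κ) * 1) / Real.sqrt (-κ)
        = Real.cosh (Real.sqrt (-κ) * x) := by field_simp
    rwa [this] at h2
  · simpa using hasDerivAt_id' x
  · have hκ : 0 < κ := lt_of_le_of_ne (not_lt.1 h) (Ne.symm h0)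
    have hs : Real.sqrt κ ≠ 0 := (Real.sqrt_pos.2 hκ).ne'
    have h1 : HasDerivAt (fun y : ℝ => Real.sin (Real.sqrt κ * y))
        (Real.cos (Real.sqrt κ * x) * (Real.sqrt κ * 1)) x :=
      (Real.hasDerivAt_sin _).comp x ((hasDerivAt_id x).const_mul _)
    have h2 := h1.div_const (Real.sqrt κ)
    have : Real.cos (Real.sqrt κ * x) * (Real.sqrt κ * 1) / Real.sqrt κ
        = Real.cos (Real.sqrt κ * x) := by field_simp
    rwa [this] at h2

lemma hasDerivAt_cosK_zero (κ : ℝ) : HasDerivAt (cosK κ) 0 0 := by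
  unfold cosK
  split_ifs with h h0
  · have h1 : HasDerivAt (fun y : ℝ => Real.cosh (Real.sqrt (-κ) * y))
        (Real.sinh (Real.sqrt (-κ) * 0) * (Real.sqrt (-κ) * 1)) 0 :=
      (Real.hasDerivAt_cosh _).comp 0 ((hasDerivAt_id 0).const_mul _)
    simpa using h1
  · exact hasDerivAt_const 0 1
  · have h1 : HasDerivAt (fun y : ℝ => Real.cos (Real.sqrt κ * y))
        (-Real.sin (Real.sqrt κ * 0) * (Real.sqrt κ * 1)) 0 :=
      (Real.hasDerivAt_cos _).comp 0 ((hasDerivAt_id 0).const_mul _)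
    simpa using h1

lemma tendsto_slope_right' {f : ℝ → ℝ} {d : ℝ} (hf : HasDerivAt f d 0) :
    Tendsto (fun h : ℝ => (f h - f 0) / h) (nhdsWithin 0 (Set.Ioi 0)) (nhds d) := by
  have h1 : Tendsto (slope f 0) (nhdsWithin 0 {(0:ℝ)}ᶜ) (nhds d) :=
    hasDerivAt_iff_tendsto_slope.1 hf
  have h2 : Tendsto (slope f 0) (nhdsWithin 0 (Set.Ioi 0)) (nhds d) :=
    h1.mono_left (nhdsWithin_mono _ (by intro h hh; exact Set.mem_compl_singleton_iff.2 (ne_of_gt hh)))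
  refine h2.congr fun h => ?_
  rw [slope_def_field]
  rw [sub_zero]

set_option maxHeartbeats 2000000 in
/-- Gluing criterion: a continuous function which is κ-concave on `(a,c]` and on
`[c,b)` is κ-concave on `(a,b)` if and only if its left derivative at `c` is at
least its right derivative at `c`. -/
theorem kConcIneq_glue_iff (κ a b c : ℝ) (hac : a < c) (hcb : c < b)
    (hπ : (b - a) * Real.sqrt (max κ 0) < Real.pi)
    (u : ℝ → ℝ) (hcont : ContinuousOn u (Set.Ioo a b))
    (hleft : KConcIneqOn κ u (Set.Ioc a c))
    (hright : KConcIneqOn κ u (Set.Ico c b))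
    (mMinus mPlus : ℝ)
    (hMinus : Tendsto (fun h : ℝ => (u c - u (c - h)) / h)
      (nhdsWithin 0 (Set.Ioi 0)) (nhds mMinus))
    (hPlus : Tendsto (fun h : ℝ => (u (c + h) - u c) / h)
      (nhdsWithin 0 (Set.Ioi 0)) (nhds mPlus)) :
    KConcIneqOn κ u (Set.Ioo a b) ↔ mPlus ≤ mMinus := by
  have hπ' : ∀ d : ℝ, d ≤ b - a → (0 < κ → d * Real.sqrt κ < Real.pi) := by
    intro d hd hκ0
    have h1 : d * Real.sqrt κ ≤ (b - a) * Real.sqrt κ :=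
      mul_le_mul_of_nonneg_right hd (Real.sqrt_nonneg κ)
    have h2 : (b - a) * Real.sqrt (max κ 0) < Real.pi := hπ
    rw [max_eq_left hκ0.le] at h2
    linarith
  constructor
  · -- forward
    intro H
    have hF : Tendsto (fun h : ℝ => (u (c + h) - u c) / h - (u c - u (c - h)) / h)
        (nhdsWithin 0 (Set.Ioi 0)) (nhds (mPlus - mMinus)) := hPlus.sub hMinus
    have hφ : Tendsto (fun h : ℝ => 2 * u c * ((cosK κ h - cosK κ 0) / h))
        (nhdsWithin 0 (Set.Ioi 0)) (nhds (2 * u c * 0)) :=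
      (tendsto_slope_right' (hasDerivAt_cosK_zero κ)).const_mul _
    rw [mul_zero] at hφ
    have hle : ∀ᶠ h in nhdsWithin (0:ℝ) (Set.Ioi 0),
        (u (c + h) - u c) / h - (u c - u (c - h)) / h ≤ 2 * u c * ((cosK κ h - cosK κ 0) / h) := by
      have hmin : (0:ℝ) < min (c - a) (b - c) := lt_min (by linarith) (by linarith)
      filter_upwards [Ioo_mem_nhdsGT hmin] with h hh
      obtain ⟨h0, hlt⟩ := hh
      have hha : h < c - a := lt_of_lt_of_le hlt (min_le_left _ _)
      have hhb : h < b - c := lt_of_lt_of_le hlt (min_le_right _ _)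
      have h2h : (0:ℝ) < (c + h) - (c - h) := by linarith
      have hmain := H (c - h) ⟨by linarith, by linarith⟩ (c + h) ⟨by linarith, by linarith⟩
        h2h (hπ' _ (by linarith)) (1/2) ⟨by norm_num, by norm_num⟩
      rw [show (1 - (1:ℝ)/2) * (c - h) + (1/2) * (c + h) = c by ring,
        show (1 - (1:ℝ)/2) * ((c + h) - (c - h)) = h by ring,
        show ((1:ℝ)/2) * ((c + h) - (c - h)) = h by ring,
        show (c + h) - (c - h) = h + h by ring] at hmain
      have hsh : 0 < sinK κ h := sinK_pos h0 (hπ' _ (by linarith))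
      have hs2h : 0 < sinK κ (h + h) := sinK_pos (by linarith) (hπ' _ (by linarith))
      -- from hmain : u c ≥ sinK h / sinK (h+h) * u (c-h) + sinK h / sinK (h+h) * u (c+h)
      have hineq : sinK κ h * u (c - h) + sinK κ h * u (c + h) ≤ u c * sinK κ (h + h) := by
        rw [ge_iff_le, div_mul_eq_mul_div, div_mul_eq_mul_div, ← add_div,
          div_le_iff₀ hs2h] at hmain
        linarith
      rw [show sinK κ (h + h) = sinK κ h * (2 * cosK κ h) by rw [sinK_add]; ring] at hineq
      have h2' : u (c - h) + u (c + h) ≤ 2 * u c * cosK κ h := by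
        have := (mul_le_mul_iff_right₀ hsh).1
          (show sinK κ h * (u (c - h) + u (c + h)) ≤ sinK κ h * (2 * u c * cosK κ h) by
            nlinarith [hineq])
        linarith
      rw [cosK_zero, div_sub_div_same,
        show 2 * u c * ((cosK κ h - 1) / h) = (2 * u c * (cosK κ h - 1)) / h by ring]
      exact (div_le_div_iff_of_pos_right h0).2 (by linarith)
    have := le_of_tendsto_of_tendsto hF hφ hle
    linarith
  · -- reverse
    intro hm x hx y hy hxy hκc t ht
    rcases le_or_gt y c with hyc | hcy
    · exact hleft x ⟨hx.1, by linarith [hx.1, hx.2]⟩ y ⟨by linarith [hx.1], hyc⟩ hxy hκc t ht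
    rcases le_or_gt c x with hcx | hxc
    · exact hright x ⟨hcx, hx.2⟩ y ⟨by linarith, hy.2⟩ hxy hκc t ht
    obtain ⟨hax, hxb⟩ := hx
    obtain ⟨hay, hyb⟩ := hy
    obtain ⟨ht0, ht1⟩ := ht
    have hp : 0 < c - x := by linarith
    have hq : 0 < y - c := by linarith
    have hsp : 0 < sinK κ (c - x) := sinK_pos hp (hπ' _ (by linarith))
    have hsq : 0 < sinK κ (y - c) := sinK_pos hq (hπ' _ (by linarith))
    have hsyx : 0 < sinK κ (y - x) := sinK_pos hxy (hπ' _ (by linarith))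
    -- left derivative comparison
    have TG : Tendsto (fun h : ℝ =>
        (u c - (sinK κ h * u x + sinK κ (c - x - h) * u c) / sinK κ (c - x)) / h)
        (nhdsWithin 0 (Set.Ioi 0))
        (nhds ((u c * cosK κ (c - x) - u x) / sinK κ (c - x))) := by
      have T1 : Tendsto (fun h : ℝ => (sinK κ h - sinK κ 0) / h) (nhdsWithin 0 (Set.Ioi 0))
          (nhds (cosK κ 0)) := tendsto_slope_right' (hasDerivAt_sinK κ 0)
      rw [cosK_zero] at T1
      have D2 : HasDerivAt (fun h : ℝ => sinK κ (c - x - h)) (-cosK κ (c - x)) 0 := by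
        have hg : HasDerivAt (fun h : ℝ => c - x - h) (0 - 1) 0 :=
          (hasDerivAt_const (0:ℝ) (c - x)).sub (hasDerivAt_id 0)
        have := (hasDerivAt_sinK κ (c - x - 0)).comp 0 hg
        simp only [sub_zero, zero_sub, mul_neg, mul_one] at this
        exact this
      have T2 : Tendsto (fun h : ℝ =>
          ((fun h : ℝ => sinK κ (c - x - h)) h - (fun h : ℝ => sinK κ (c - x - h)) 0) / h)
          (nhdsWithin 0 (Set.Ioi 0)) (nhds (-cosK κ (c - x))) := tendsto_slope_right' D2
      have T3 := ((T1.const_mul (-(u x))).sub (T2.const_mul (u c))).div_const (sinK κ (c - x))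
      have hval : (-(u x) * 1 - u c * -cosK κ (c - x)) / sinK κ (c - x)
          = (u c * cosK κ (c - x) - u x) / sinK κ (c - x) := by ring
      rw [hval] at T3
      refine Tendsto.congr' ?_ T3
      filter_upwards [self_mem_nhdsWithin] with h h0
      have h0' : (h:ℝ) ≠ 0 := ne_of_gt h0
      simp only [sinK_zero, sub_zero]
      field_simp
      ring
    have hFG : ∀ᶠ h in nhdsWithin (0:ℝ) (Set.Ioi 0), (u c - u (c - h)) / h ≤
        (u c - (sinK κ h * u x + sinK κ (c - x - h) * u c) / sinK κ (c - x)) / h := by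
      filter_upwards [Ioo_mem_nhdsGT hp] with h hh
      obtain ⟨h0, hhp⟩ := hh
      have hcx0 : c - x ≠ 0 := ne_of_gt hp
      have ht' : (c - x - h) / (c - x) ∈ Set.Icc (0:ℝ) 1 :=
        ⟨div_nonneg (by linarith) hp.le, by rw [div_le_one hp]; linarith⟩
      have hK := hleft x ⟨hax, hxc.le⟩ c ⟨hac, le_refl c⟩ hp (hπ' _ (by linarith)) _ ht'
      rw [show (1 - (c - x - h) / (c - x)) * x + (c - x - h) / (c - x) * c = c - h by
          field_simp <;> ring,
        show (1 - (c - x - h) / (c - x)) * (c - x) = h by field_simp <;> ring,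
        show (c - x - h) / (c - x) * (c - x) = c - x - h by field_simp] at hK
      have expand : (sinK κ h * u x + sinK κ (c - x - h) * u c) / sinK κ (c - x)
          = sinK κ h / sinK κ (c - x) * u x + sinK κ (c - x - h) / sinK κ (c - x) * u c := by
        ring
      exact (div_le_div_iff_of_pos_right h0).2 (by linarith [hK, expand])
    have L1 : mMinus ≤ (u c * cosK κ (c - x) - u x) / sinK κ (c - x) :=
      le_of_tendsto_of_tendsto hMinus TG hFG
    -- right derivative comparison
    have TH : Tendsto (fun h : ℝ =>
        ((sinK κ (y - c - h) * u c + sinK κ h * u y) / sinK κ (y - c) - u c) / h)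
        (nhdsWithin 0 (Set.Ioi 0))
        (nhds ((u y - u c * cosK κ (y - c)) / sinK κ (y - c))) := by
      have T1 : Tendsto (fun h : ℝ => (sinK κ h - sinK κ 0) / h) (nhdsWithin 0 (Set.Ioi 0))
          (nhds (cosK κ 0)) := tendsto_slope_right' (hasDerivAt_sinK κ 0)
      rw [cosK_zero] at T1
      have D2 : HasDerivAt (fun h : ℝ => sinK κ (y - c - h)) (-cosK κ (y - c)) 0 := by
        have hg : HasDerivAt (fun h : ℝ => y - c - h) (0 - 1) 0 :=
          (hasDerivAt_const (0:ℝ) (y - c)).sub (hasDerivAt_id 0)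
        have := (hasDerivAt_sinK κ (y - c - 0)).comp 0 hg
        simp only [sub_zero, zero_sub, mul_neg, mul_one] at this
        exact this
      have T2 : Tendsto (fun h : ℝ =>
          ((fun h : ℝ => sinK κ (y - c - h)) h - (fun h : ℝ => sinK κ (y - c - h)) 0) / h)
          (nhdsWithin 0 (Set.Ioi 0)) (nhds (-cosK κ (y - c))) := tendsto_slope_right' D2
      have T3 := ((T2.const_mul (u c)).add (T1.const_mul (u y))).div_const (sinK κ (y - c))
      have hval : (u c * -cosK κ (y - c) + u y * 1) / sinK κ (y - c)
          = (u y - u c * cosK κ (y - c)) / sinK κ (y - c) := by ring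
      rw [hval] at T3
      refine Tendsto.congr' ?_ T3
      filter_upwards [self_mem_nhdsWithin] with h h0
      have h0' : (h:ℝ) ≠ 0 := ne_of_gt h0
      simp only [sinK_zero, sub_zero]
      field_simp
      ring
    have hHF : ∀ᶠ h in nhdsWithin (0:ℝ) (Set.Ioi 0),
        ((sinK κ (y - c - h) * u c + sinK κ h * u y) / sinK κ (y - c) - u c) / h ≤
        (u (c + h) - u c) / h := by
      filter_upwards [Ioo_mem_nhdsGT hq] with h hh
      obtain ⟨h0, hhq⟩ := hh
      have hyc0 : y - c ≠ 0 := ne_of_gt hq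
      have ht' : h / (y - c) ∈ Set.Icc (0:ℝ) 1 :=
        ⟨div_nonneg h0.le hq.le, by rw [div_le_one hq]; linarith⟩
      have hK := hright c ⟨le_refl c, hcb⟩ y ⟨hcy.le, hyb⟩ hq (hπ' _ (by linarith)) _ ht'
      rw [show (1 - h / (y - c)) * c + h / (y - c) * y = c + h by field_simp <;> ring,
        show (1 - h / (y - c)) * (y - c) = y - c - h by field_simp,
        show h / (y - c) * (y - c) = h by field_simp] at hK
      have expand : (sinK κ (y - c - h) * u c + sinK κ h * u y) / sinK κ (y - c)
          = sinK κ (y - c - h) / sinK κ (y - c) * u c + sinK κ h / sinK κ (y - c) * u y := by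
        ring
      exact (div_le_div_iff_of_pos_right h0).2 (by linarith [hK, expand])
    have L2 : (u y - u c * cosK κ (y - c)) / sinK κ (y - c) ≤ mPlus :=
      le_of_tendsto_of_tendsto TH hPlus hHF
    -- key inequality at c
    have hBA : (u y - u c * cosK κ (y - c)) / sinK κ (y - c) ≤
        (u c * cosK κ (c - x) - u x) / sinK κ (c - x) := le_trans L2 (le_trans hm L1)
    rw [div_le_div_iff₀ hsq hsp] at hBA
    have hadd : sinK κ (y - x) = sinK κ (c - x) * cosK κ (y - c) + cosK κ (c - x) * sinK κ (y - c) := by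
      rw [show y - x = (c - x) + (y - c) by ring, sinK_add]
    have hKey : u x * sinK κ (y - c) + u y * sinK κ (c - x) ≤ u c * sinK κ (y - x) := by
      rw [hadd]; nlinarith [hBA]
    -- final interpolation
    set w := (1 - t) * x + t * y with hw
    clear_value w
    rw [show (1 - t) * (y - x) = y - w by rw [hw]; ring,
      show t * (y - x) = w - x by rw [hw]; ring]
    have hxw : x ≤ w := by nlinarith [mul_nonneg ht0 hxy.le]
    have hwy : w ≤ y := by nlinarith [mul_nonneg (sub_nonneg.2 ht1) hxy.le]
    rcases le_or_gt w c with hwc | hcw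
    · -- w in [x, c]
      have hcx0 : c - x ≠ 0 := ne_of_gt hp
      have ht2 : (w - x) / (c - x) ∈ Set.Icc (0:ℝ) 1 :=
        ⟨div_nonneg (by linarith) hp.le, by rw [div_le_one hp]; linarith⟩
      have hK := hleft x ⟨hax, hxc.le⟩ c ⟨hac, le_refl c⟩ hp (hπ' _ (by linarith)) _ ht2
      rw [show (1 - (w - x) / (c - x)) * x + (w - x) / (c - x) * c = w by field_simp <;> ring,
        show (1 - (w - x) / (c - x)) * (c - x) = c - w by field_simp <;> ring,
        show (w - x) / (c - x) * (c - x) = w - x by field_simp] at hK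
      have hswx : 0 ≤ sinK κ (w - x) := sinK_nonneg (by linarith) (hπ' _ (by linarith))
      have step : sinK κ (y - w) / sinK κ (y - x) * u x + sinK κ (w - x) / sinK κ (y - x) * u y ≤
          sinK κ (c - w) / sinK κ (c - x) * u x + sinK κ (w - x) / sinK κ (c - x) * u c := by
        rw [div_mul_eq_mul_div, div_mul_eq_mul_div, ← add_div,
          div_mul_eq_mul_div, div_mul_eq_mul_div, ← add_div,
          div_le_div_iff₀ hsyx hsp]
        have hid : u x * (sinK κ (c - x) * sinK κ (y - w)) =
            u x * (sinK κ (c - w) * sinK κ (y - x) + sinK κ (w - x) * sinK κ (y - c)) := by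
          rw [sinK_quad κ x w c y]
        have hKey2 : sinK κ (w - x) * (u x * sinK κ (y - c) + u y * sinK κ (c - x)) ≤
            sinK κ (w - x) * (u c * sinK κ (y - x)) := mul_le_mul_of_nonneg_left hKey hswx
        ring_nf at hid hKey2 ⊢
        linarith [hid, hKey2]
      linarith [hK, step]
    · -- w in [c, y]
      have hyc0 : y - c ≠ 0 := ne_of_gt hq
      have ht2 : (w - c) / (y - c) ∈ Set.Icc (0:ℝ) 1 :=
        ⟨div_nonneg (by linarith) hq.le, by rw [div_le_one hq]; linarith⟩
      have hK := hright c ⟨le_refl c, hcb⟩ y ⟨hcy.le, hyb⟩ hq (hπ' _ (by linarith)) _ ht2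
      rw [show (1 - (w - c) / (y - c)) * c + (w - c) / (y - c) * y = w by field_simp <;> ring,
        show (1 - (w - c) / (y - c)) * (y - c) = y - w by field_simp <;> ring,
        show (w - c) / (y - c) * (y - c) = w - c by field_simp] at hK
      have hsyw : 0 ≤ sinK κ (y - w) := sinK_nonneg (by linarith) (hπ' _ (by linarith))
      have step : sinK κ (y - w) / sinK κ (y - x) * u x + sinK κ (w - x) / sinK κ (y - x) * u y ≤
          sinK κ (y - w) / sinK κ (y - c) * u c + sinK κ (w - c) / sinK κ (y - c) * u y := by
        rw [div_mul_eq_mul_div, div_mul_eq_mul_div, ← add_div,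
          div_mul_eq_mul_div, div_mul_eq_mul_div, ← add_div,
          div_le_div_iff₀ hsyx hsq]
        have hid : u y * (sinK κ (w - x) * sinK κ (y - c)) =
            u y * (sinK κ (w - c) * sinK κ (y - x) + sinK κ (c - x) * sinK κ (y - w)) := by
          rw [sinK_quad κ x c w y]
        have hKey2 : sinK κ (y - w) * (u x * sinK κ (y - c) + u y * sinK κ (c - x)) ≤
            sinK κ (y - w) * (u c * sinK κ (y - x)) := mul_le_mul_of_nonneg_left hKey hsyw
        ring_nf at hid hKey2 ⊢
        linarith [hid, hKey2]
      linarith [hK, step]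
end

section
/- Let K ∈ ℝ, let N > 1 be real, and let a < b be reals with (b−a)·√(max(K,0)/(N−1)) < π. Let h : [a,b] → [0,∞) be Borel measurable and suppose that h^{1/(N−1)} satisfies the K/(N−1)-concavity inequality on [a,b]: for all x, y ∈ [a,b] with 0 < y − x and all t ∈ [0,1], h((1−t)x + ty)^{1/(N−1)} ≥ σ^{(1−t)}(y−x)·h(x)^{1/(N−1)} + σ^{(t)}(y−x)·h(y)^{1/(N−1)}, where σ^{(t)}(θ) = sin_{K/(N−1)}(tθ)/sin_{K/(N−1)}(θ). Then for every Borel set J ⊆ [a,b) and every t ∈ [0,1): ∫_{(1−t)J + t b} h(x) dx ≥ (1−t) · ∫_J ( sin_{K/(N−1)}((1−t)(b−x)) / sin_{K/(N−1)}(b−x) )^{N−1} · h(x) dx, where (1−t)J + t b = {(1−t)x + t b : x ∈ J} and the integrals are with respect to Lebesgue measure. -/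
open Real Set MeasureTheory

lemma continuous_sinK (κ : ℝ) : Continuous (sinK κ) := by
  rcases lt_trichotomy κ 0 with hκ | hκ | hκ
  · have he : sinK κ = fun x => Real.sinh (Real.sqrt (-κ) * x) / Real.sqrt (-κ) :=
      funext fun x => by simp only [sinK, if_pos hκ]
    rw [he]
    exact (Real.continuous_sinh.comp (continuous_const.mul continuous_id)).div_const _
  · subst hκ
    have he : sinK 0 = fun x : ℝ => x :=
      funext fun x => by simp [sinK]
    rw [he]
    exact continuous_id
  · have he : sinK κ = fun x => Real.sin (Real.sqrt κ * x) / Real.sqrt κ :=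
      funext fun x => by simp only [sinK, if_neg (not_lt.2 hκ.le), if_neg hκ.ne']
    rw [he]
    exact (Real.continuous_sin.comp (continuous_const.mul continuous_id)).div_const _

lemma sinK_nonneg' {κ s L : ℝ} (hs : 0 ≤ s) (hsL : s ≤ L)
    (hL : 0 < κ → Real.sqrt κ * L ≤ Real.pi) : 0 ≤ sinK κ s := by
  rcases lt_trichotomy κ 0 with hκ | hκ | hκ
  · simp only [sinK, if_pos hκ]
    exact div_nonneg (Real.sinh_nonneg_iff.2 (mul_nonneg (Real.sqrt_nonneg _) hs))
      (Real.sqrt_nonneg _)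
  · subst hκ
    simpa only [sinK, lt_irrefl, if_false, if_pos rfl, if_pos trivial] using hs
  · simp only [sinK, if_neg (not_lt.2 hκ.le), if_neg hκ.ne']
    have hsq : 0 ≤ Real.sqrt κ := Real.sqrt_nonneg _
    refine div_nonneg (Real.sin_nonneg_of_nonneg_of_le_pi (mul_nonneg hsq hs) ?_) hsq
    exact le_trans (mul_le_mul_of_nonneg_left hsL hsq) (hL hκ)

lemma sinK_pos' {κ s L : ℝ} (hs : 0 < s) (hsL : s ≤ L)
    (hL : 0 < κ → Real.sqrt κ * L < Real.pi) : 0 < sinK κ s := by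
  rcases lt_trichotomy κ 0 with hκ | hκ | hκ
  · have hsq : 0 < Real.sqrt (-κ) := Real.sqrt_pos.2 (by linarith)
    simp only [sinK, if_pos hκ]
    exact div_pos (Real.sinh_pos_iff.2 (mul_pos hsq hs)) hsq
  · subst hκ
    simpa only [sinK, lt_irrefl, if_false, if_pos rfl, if_pos trivial] using hs
  · have hsq : 0 < Real.sqrt κ := Real.sqrt_pos.2 hκ
    simp only [sinK, if_neg (not_lt.2 hκ.le), if_neg hκ.ne']
    refine div_pos (Real.sin_pos_of_pos_of_lt_pi (mul_pos hsq hs) ?_) hsq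
    exact lt_of_le_of_lt (mul_le_mul_of_nonneg_left hsL hsq.le) (hL hκ)

set_option maxHeartbeats 2000000 in
/-- One-dimensional Brunn–Minkowski-type contraction estimate towards the endpoint `b`
for a `CD(K,N)` density `h` on `[a,b]`. -/
theorem density_contraction_estimate (K N a b : ℝ) (hN : 1 < N) (hab : a < b)
    (hπ : (b - a) * Real.sqrt (max K 0 / (N - 1)) < Real.pi)
    (h : ℝ → ℝ) (hmeas : Measurable h) (hnonneg : ∀ x ∈ Set.Icc a b, 0 ≤ h x)
    (hconc : ∀ x ∈ Set.Icc a b, ∀ y ∈ Set.Icc a b, 0 < y - x →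
      ∀ t ∈ Set.Icc (0:ℝ) 1,
        h ((1 - t) * x + t * y) ^ (1 / (N - 1)) ≥
          (sinK (K / (N - 1)) ((1 - t) * (y - x)) / sinK (K / (N - 1)) (y - x)) *
            h x ^ (1 / (N - 1)) +
          (sinK (K / (N - 1)) (t * (y - x)) / sinK (K / (N - 1)) (y - x)) *
            h y ^ (1 / (N - 1))) :
    ∀ J : Set ℝ, MeasurableSet J → J ⊆ Set.Ico a b → ∀ t ∈ Set.Ico (0:ℝ) 1,
      ∫ x in (fun x : ℝ => (1 - t) * x + t * b) '' J, h x ≥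
        (1 - t) * ∫ x in J,
          (sinK (K / (N - 1)) ((1 - t) * (b - x)) / sinK (K / (N - 1)) (b - x))
            ^ (N - 1) * h x := by
  intro J hJmeas hJsub t ht
  obtain ⟨ht0, ht1⟩ := ht
  have hN1 : (0:ℝ) < N - 1 := by linarith
  set κ := K / (N - 1) with hκdef
  have hba : 0 < b - a := by linarith
  have hLπ : 0 < κ → Real.sqrt κ * (b - a) < Real.pi := by
    intro hκ
    have hK : 0 < K := by
      by_contra hK
      push_neg at hK
      have : κ ≤ 0 := div_nonpos_iff.2 (Or.inr ⟨hK, hN1.le⟩)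
      linarith
    have hmax : max K 0 = K := max_eq_left hK.le
    calc Real.sqrt κ * (b - a) = (b - a) * Real.sqrt (max K 0 / (N - 1)) := by
          rw [hmax, mul_comm]
      _ < Real.pi := hπ
  have hpos : ∀ s, 0 < s → s ≤ b - a → 0 < sinK κ s :=
    fun s hs hsL => sinK_pos' hs hsL hLπ
  have hnn : ∀ s, 0 ≤ s → s ≤ b - a → 0 ≤ sinK κ s :=
    fun s hs hsL => sinK_nonneg' hs hsL (fun hκ => (hLπ hκ).le)
  -- a uniform bound on sinK κ over [0, b - a]
  obtain ⟨smax, hsmaxmem, hSmax⟩ := (isCompact_Icc (a := (0:ℝ)) (b := b - a)).exists_isMaxOn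
    ⟨0, by constructor <;> linarith⟩ (continuous_sinK κ).continuousOn
  set S := sinK κ smax with hSdef
  set m := (a + b) / 2 with hm
  have hma : a < m := by rw [hm]; linarith
  have hmb : m < b := by rw [hm]; linarith
  have hbm : b - m = (b - a) / 2 := by rw [hm]; ring
  have hma' : m - a = (b - a) / 2 := by rw [hm]; ring
  have hs₀ : 0 < sinK κ ((b - a) / 2) := hpos _ (by linarith) (by linarith)
  set C := h m ^ (1 / (N - 1)) * S / sinK κ ((b - a) / 2) with hC
  have hgm0 : 0 ≤ h m ^ (1 / (N - 1)) := Real.rpow_nonneg (hnonneg m ⟨hma.le, hmb.le⟩) _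
  -- boundedness of h^{1/(N-1)} by C
  have hgC : ∀ z ∈ Set.Icc a b, h z ^ (1 / (N - 1)) ≤ C := by
    intro z hz
    obtain ⟨hza, hzb⟩ := hz
    by_cases hzm : z < m
    · have hbz : 0 < b - z := by linarith
      have hbzL : b - z ≤ b - a := by linarith
      have hd : 0 < sinK κ (b - z) := hpos _ hbz hbzL
      set t' := (m - z) / (b - z) with ht'
      have ht'0 : 0 ≤ t' := div_nonneg (by linarith) hbz.le
      have ht'1 : t' ≤ 1 := by rw [ht', div_le_one hbz]; linarith
      have hcomb : (1 - t') * z + t' * b = m := by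
        rw [ht']; field_simp; ring
      have h1t' : (1 - t') * (b - z) = (b - a) / 2 := by
        rw [ht', sub_mul, one_mul, div_mul_cancel₀ _ hbz.ne']
        linarith [hbm]
      have htbz : t' * (b - z) = m - z := by
        rw [ht']; field_simp
      have hkey := hconc z ⟨hza, hzb⟩ b ⟨hab.le, le_refl b⟩ hbz t' ⟨ht'0, ht'1⟩
      rw [hcomb, h1t', htbz] at hkey
      have h2 : 0 ≤ sinK κ (m - z) / sinK κ (b - z) * h b ^ (1 / (N - 1)) :=
        mul_nonneg (div_nonneg (hnn _ (by linarith) (by linarith)) hd.le)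
          (Real.rpow_nonneg (hnonneg b ⟨hab.le, le_refl b⟩) _)
      have hkey2 : sinK κ ((b - a) / 2) / sinK κ (b - z) * h z ^ (1 / (N - 1)) ≤
          h m ^ (1 / (N - 1)) := by linarith
      rw [div_mul_eq_mul_div, div_le_iff₀ hd] at hkey2
      have step1 : h z ^ (1 / (N - 1)) ≤ h m ^ (1 / (N - 1)) * sinK κ (b - z) /
          sinK κ ((b - a) / 2) := by
        rw [le_div_iff₀ hs₀, mul_comm]
        exact hkey2
      refine step1.trans ?_
      rw [hC]
      gcongr
      exact hSmax ⟨hbz.le, hbzL⟩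
    · push_neg at hzm
      have hza' : 0 < z - a := by linarith
      have hzaL : z - a ≤ b - a := by linarith
      have hd : 0 < sinK κ (z - a) := hpos _ hza' hzaL
      set t' := (m - a) / (z - a) with ht'
      have ht'0 : 0 ≤ t' := div_nonneg (by linarith) hza'.le
      have ht'1 : t' ≤ 1 := by rw [ht', div_le_one hza']; linarith
      have hcomb : (1 - t') * a + t' * z = m := by
        rw [ht']; field_simp; ring
      have h1t' : (1 - t') * (z - a) = z - m := by
        rw [ht', sub_mul, one_mul, div_mul_cancel₀ _ hza'.ne']
        ring
      have htza : t' * (z - a) = (b - a) / 2 := by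
        rw [ht', div_mul_cancel₀ _ hza'.ne']
        exact hma'
      have hkey := hconc a ⟨le_refl a, hab.le⟩ z ⟨hza, hzb⟩ hza' t' ⟨ht'0, ht'1⟩
      rw [hcomb, h1t', htza] at hkey
      have h2 : 0 ≤ sinK κ (z - m) / sinK κ (z - a) * h a ^ (1 / (N - 1)) :=
        mul_nonneg (div_nonneg (hnn _ (by linarith) (by linarith)) hd.le)
          (Real.rpow_nonneg (hnonneg a ⟨le_refl a, hab.le⟩) _)
      have hkey2 : sinK κ ((b - a) / 2) / sinK κ (z - a) * h z ^ (1 / (N - 1)) ≤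
          h m ^ (1 / (N - 1)) := by linarith
      rw [div_mul_eq_mul_div, div_le_iff₀ hd] at hkey2
      have step1 : h z ^ (1 / (N - 1)) ≤ h m ^ (1 / (N - 1)) * sinK κ (z - a) /
          sinK κ ((b - a) / 2) := by
        rw [le_div_iff₀ hs₀, mul_comm]
        exact hkey2
      refine step1.trans ?_
      rw [hC]
      gcongr
      exact hSmax ⟨hza'.le, hzaL⟩
  have hC0 : 0 ≤ C := le_trans hgm0 (hgC m ⟨hma.le, hmb.le⟩)
  set M := C ^ (N - 1) with hMdef
  have hM : ∀ z ∈ Set.Icc a b, h z ≤ M := by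
    intro z hz
    have := Real.rpow_le_rpow (Real.rpow_nonneg (hnonneg z hz) _) (hgC z hz) hN1.le
    rwa [one_div, Real.rpow_inv_rpow (hnonneg z hz) (by linarith : N - 1 ≠ 0)] at this
  -- the affine map
  set φ := fun x : ℝ => (1 - t) * x + t * b with hφ
  have h1t : 0 < 1 - t := by linarith
  have hJab : J ⊆ Set.Icc a b := hJsub.trans Set.Ico_subset_Icc_self
  have hφmem : ∀ x ∈ J, φ x ∈ Set.Icc a b := by
    intro x hx
    obtain ⟨hxa, hxb⟩ := hJsub hx
    simp only [hφ]
    constructor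
    · nlinarith [mul_nonneg h1t.le (by linarith : (0:ℝ) ≤ x - a), mul_nonneg ht0 hba.le]
    · nlinarith [mul_nonneg h1t.le (by linarith : (0:ℝ) ≤ b - x)]
  -- nonnegativity of the ratio
  have hσnn : ∀ x ∈ J, 0 ≤ sinK κ ((1 - t) * (b - x)) / sinK κ (b - x) := by
    intro x hx
    obtain ⟨hxa, hxb⟩ := hJsub hx
    have hbx : 0 < b - x := by linarith
    refine div_nonneg (hnn _ (mul_nonneg h1t.le hbx.le) ?_) (hpos _ hbx (by linarith)).le
    nlinarith [mul_nonneg ht0 hbx.le]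
  -- pointwise inequality
  have hptwise : ∀ x ∈ J,
      (sinK κ ((1 - t) * (b - x)) / sinK κ (b - x)) ^ (N - 1) * h x ≤ h (φ x) := by
    intro x hx
    obtain ⟨hxa, hxb⟩ := hJsub hx
    have hbx : 0 < b - x := by linarith
    have hd : 0 < sinK κ (b - x) := hpos _ hbx (by linarith)
    have hσ := hσnn x hx
    have hkey := hconc x ⟨hxa, hxb.le⟩ b ⟨hab.le, le_refl b⟩ hbx t ⟨ht0, ht1.le⟩
    have hdrop : sinK κ ((1 - t) * (b - x)) / sinK κ (b - x) * h x ^ (1 / (N - 1)) ≤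
        h (φ x) ^ (1 / (N - 1)) := by
      have h2 : 0 ≤ sinK κ (t * (b - x)) / sinK κ (b - x) * h b ^ (1 / (N - 1)) :=
        mul_nonneg (div_nonneg (hnn _ (mul_nonneg ht0 hbx.le)
          (by nlinarith [mul_nonneg h1t.le hbx.le])) hd.le)
          (Real.rpow_nonneg (hnonneg b ⟨hab.le, le_refl b⟩) _)
      simp only [hφ]
      linarith [hkey]
    have hx0 : 0 ≤ h x := hnonneg x ⟨hxa, hxb.le⟩
    have := Real.rpow_le_rpow (mul_nonneg hσ (Real.rpow_nonneg hx0 _)) hdrop hN1.le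
    rwa [Real.mul_rpow hσ (Real.rpow_nonneg hx0 _), one_div,
      Real.rpow_inv_rpow hx0 (by linarith : N - 1 ≠ 0),
      Real.rpow_inv_rpow (hnonneg _ (hφmem x hx)) (by linarith : N - 1 ≠ 0)] at this
  -- change of variables
  have hderiv : ∀ x ∈ J, HasDerivWithinAt φ (1 - t) J x := by
    intro x hx
    exact (((hasDerivAt_id x).const_mul (1 - t)).add_const (t * b)).hasDerivWithinAt.congr_deriv (mul_one _)
  have hinj : Set.InjOn φ J := by
    intro x hx y hy hxy
    simp only [hφ] at hxy
    have : (1 - t) * x = (1 - t) * y := by linarith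
    exact mul_left_cancel₀ h1t.ne' this
  have hcov : ∫ x in φ '' J, h x = ∫ x in J, (1 - t) * h (φ x) := by
    rw [integral_image_eq_integral_abs_deriv_smul hJmeas hderiv hinj h]
    simp [abs_of_pos h1t]
  -- integrability
  have hJvol : volume J ≠ ⊤ := ((measure_mono hJab).trans_lt measure_Icc_lt_top).ne
  have hφm : Measurable φ := by fun_prop
  have hint1 : IntegrableOn (fun x => h (φ x)) J := by
    apply Measure.integrableOn_of_bounded hJvol (hmeas.comp hφm).aestronglyMeasurable (M := M)
    filter_upwards [ae_restrict_mem hJmeas] with x hx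
    simp only [Function.comp_apply, Real.norm_eq_abs]
    rw [abs_of_nonneg (hnonneg _ (hφmem x hx))]
    exact hM _ (hφmem x hx)
  have hσm : Measurable (fun x =>
      (sinK κ ((1 - t) * (b - x)) / sinK κ (b - x)) ^ (N - 1) * h x) := by
    have hratio : Measurable (fun x => sinK κ ((1 - t) * (b - x)) / sinK κ (b - x)) :=
      ((continuous_sinK κ).measurable.comp (by fun_prop)).div
        ((continuous_sinK κ).measurable.comp (by fun_prop))
    exact (((Real.continuous_rpow_const (by linarith : (0:ℝ) ≤ N - 1)).measurable).comp
      hratio).mul hmeas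
  have hint2 : IntegrableOn (fun x =>
      (sinK κ ((1 - t) * (b - x)) / sinK κ (b - x)) ^ (N - 1) * h x) J := by
    apply Measure.integrableOn_of_bounded hJvol hσm.aestronglyMeasurable (M := M)
    filter_upwards [ae_restrict_mem hJmeas] with x hx
    have h0 : 0 ≤ (sinK κ ((1 - t) * (b - x)) / sinK κ (b - x)) ^ (N - 1) * h x :=
      mul_nonneg (Real.rpow_nonneg (hσnn x hx) _) (hnonneg x (hJab hx))
    rw [Real.norm_eq_abs, abs_of_nonneg h0]
    exact (hptwise x hx).trans (hM _ (hφmem x hx))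
  rw [ge_iff_le, hcov, integral_const_mul]
  exact mul_le_mul_of_nonneg_left (setIntegral_mono_on hint2 hint1 hJmeas hptwise) h1t.le
end
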